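/- arXiv:2107.12581 — 3 statements merged into one kernel-verified Lean document; each statement's English description precedes it below -/
import Mathlib

section
/- Let a_n satisfy the linear recurrence a_n = c + α a_{n−2} + β a_{n−3} for n ≥ 3 with α, β > 0, α + β = 1, c > 0, and arbitrary initial values a₀, a₁, a₂ ≥ 0. Then lim_{n→∞} a_n / n = c / (2α + 3β). -/
/-- If `a_n = c + α a_{n−2} + β a_{n−3}` for `n ≥ 3`, with `α, β > 0`,
`α + β = 1`, `c > 0` and nonnegative initial values, then `a_n / n → c / (2α + 3β)`. -/
theorem linear_recurrence_limit
    (a : ℕ → ℝ) (c α β : ℝ)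
    (hc : 0 < c) (hα : 0 < α) (hβ : 0 < β) (hαβ : α + β = 1)
    (ha0 : 0 ≤ a 0) (ha1 : 0 ≤ a 1) (ha2 : 0 ≤ a 2)
    (hrec : ∀ n, 3 ≤ n → a n = c + α * a (n - 2) + β * a (n - 3)) :
    Filter.Tendsto (fun n : ℕ => a n / n) Filter.atTop (nhds (c / (2 * α + 3 * β))) := by
  set L : ℝ := c / (2 * α + 3 * β) with hL
  have hden : (0:ℝ) < 2 * α + 3 * β := by linarith
  have hc' : c = L * (2 * α + 3 * β) := by
    rw [hL, div_mul_cancel₀ _ (ne_of_gt hden)]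
  set M : ℝ := max (max |a 0 - L * 0| |a 1 - L * 1|) |a 2 - L * 2| with hM
  have hM0 : |a 0 - L * 0| ≤ M := le_trans (le_max_left _ _) (le_max_left _ _)
  have hM1 : |a 1 - L * 1| ≤ M := le_trans (le_max_right _ _) (le_max_left _ _)
  have hM2 : |a 2 - L * 2| ≤ M := le_max_right _ _
  have hb : ∀ n : ℕ, |a n - L * n| ≤ M := by
    intro n
    induction n using Nat.strong_induction_on with
    | _ n ih =>
      match n, ih with
      | 0, _ => simpa using hM0
      | 1, _ => simpa using hM1
      | 2, _ => simpa using hM2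
      | (m+3), ih =>
        have h1 : |a (m+1) - L * (m+1)| ≤ M := by
          have := ih (m+1) (by omega); simpa using this
        have h2 : |a m - L * m| ≤ M := ih m (by omega)
        have hrec' : a (m+3) = c + α * a (m+1) + β * a m := by
          have := hrec (m+3) (by omega)
          simpa using this
        have key : a (m+3) - L * ((m:ℝ)+3)
            = α * (a (m+1) - L * ((m:ℝ)+1)) + β * (a m - L * m) := by
          rw [hrec']
          linear_combination hc' + L * ((m:ℝ) + 3) * hαβ
        have : |a (m+3) - L * ((m+3:ℕ):ℝ)| ≤ M := by
          push_cast
          rw [key]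
          calc |α * (a (m+1) - L * ((m:ℝ)+1)) + β * (a m - L * m)|
              ≤ |α * (a (m+1) - L * ((m:ℝ)+1))| + |β * (a m - L * m)| := abs_add_le _ _
            _ = α * |a (m+1) - L * ((m:ℝ)+1)| + β * |a m - L * m| := by
                rw [abs_mul, abs_mul, abs_of_pos hα, abs_of_pos hβ]
            _ ≤ α * M + β * M := by
                have h1' : |a (m+1) - L * ((m:ℝ)+1)| ≤ M := by push_cast at h1; exact h1
                nlinarith
            _ = M := by rw [← add_mul, hαβ, one_mul]
        exact this
  have key : Filter.Tendsto (fun n : ℕ => (a n - L * n) / n) Filter.atTop (nhds 0) := by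
    apply squeeze_zero_norm' (a := fun n : ℕ => M / n)
    · filter_upwards [Filter.eventually_ge_atTop 1] with n hn
      have hn' : (0:ℝ) < n := by exact_mod_cast hn
      rw [Real.norm_eq_abs, abs_div, abs_of_pos hn']
      gcongr; exact hb n
    · exact tendsto_const_div_atTop_nhds_zero_nat M
  have final : Filter.Tendsto (fun n : ℕ => (a n - L * n) / n + L) Filter.atTop (nhds (0 + L)) :=
    key.add tendsto_const_nhds
  rw [zero_add] at final
  apply final.congr'
  filter_upwards [Filter.eventually_ge_atTop 1] with n hn
  have hn' : (n:ℝ) ≠ 0 := Nat.cast_ne_zero.mpr (by omega)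
  field_simp
  ring
end

section
/- For the n × n grid graph with i.i.d. edge weights uniform on {1, 2}, the expected weight of a maximum-weight matching is at most (31/32)n² − (1/8)n − (1/8). -/
/-- The `n × n` grid graph on `Fin n × Fin n`. -/
def gridGraph (n : ℕ) : SimpleGraph (Fin n × Fin n) :=
  SimpleGraph.fromRel (fun a b =>
    (a.1 = b.1 ∧ Nat.dist a.2.val b.2.val = 1) ∨ (a.2 = b.2 ∧ Nat.dist a.1.val b.1.val = 1))

/-- `M` is a matching of `G`: a set of edges of `G`, no two of which share a vertex. -/
def IsMatchingEdgeSet {V : Type*} (G : SimpleGraph V) (M : Finset (Sym2 V)) : Prop :=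
  (∀ e ∈ M, e ∈ G.edgeSet) ∧
    ∀ e ∈ M, ∀ f ∈ M, e ≠ f → ∀ x : V, ¬(x ∈ e ∧ x ∈ f)

/-- The maximum total weight over all matchings of `G`, for edge weights `w`. -/
noncomputable def maxMatchingWeight {V : Type*} [Fintype V]
    (G : SimpleGraph V) (w : Sym2 V → ℝ) : ℝ :=
  sSup {x : ℝ | ∃ M : Finset (Sym2 V), IsMatchingEdgeSet G M ∧ x = ∑ e ∈ M, w e}

open Finset

private lemma sym2_sum_mem {V : Type*} [Fintype V] [DecidableEq V] (e : Sym2 V)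
    (he : ¬ e.IsDiag) (c : ℝ) :
    ∑ v, (if v ∈ e then c else 0) = 2 * c := by
  induction e using Sym2.ind with
  | _ x y =>
    have hxy : x ≠ y := by simpa using he
    rw [← Finset.sum_filter]
    have hf : Finset.univ.filter (fun v => v ∈ s(x, y)) = {x, y} := by
      ext z; simp [Sym2.mem_iff]
    rw [hf, Finset.sum_pair hxy]; ring

private lemma pow_half_calc (N k : ℕ) (h : k ≤ N) :
    ((1:ℝ)/2)^N * (2:ℝ)^(N - k) = (1/2)^k := by
  obtain ⟨m, rfl⟩ : ∃ m, N = m + k := ⟨N - k, by omega⟩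
  rw [Nat.add_sub_cancel, pow_add]
  have h1 : ((1:ℝ)/2)^m * 2^m = 1 := by rw [← mul_pow]; norm_num
  calc ((1:ℝ)/2)^m * (1/2)^k * 2^m = ((1/2)^m * 2^m) * (1/2)^k := by ring
    _ = (1/2)^k := by rw [h1, one_mul]

private lemma card_forall_false {α : Type*} [Fintype α] [DecidableEq α] (s : Finset α) :
    (Finset.univ.filter (fun f : α → Bool => ∀ a ∈ s, f a = false)).card
      = 2 ^ (Fintype.card α - s.card) := by
  rw [← Fintype.card_subtype]
  have e : {f : α → Bool // ∀ a ∈ s, f a = false} ≃ ({a : α // a ∉ s} → Bool) :=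
    { toFun := fun f a => f.1 a.1
      invFun := fun g => ⟨fun a => if h : a ∈ s then false else g ⟨a, h⟩,
        fun a ha => by simp [ha]⟩
      left_inv := fun f => by
        apply Subtype.ext; funext a
        by_cases h : a ∈ s
        · simp [h, f.2 a h]
        · simp [h]
      right_inv := fun g => by
        funext a
        simp [a.2] }
  rw [Fintype.card_congr e, Fintype.card_fun, Fintype.card_bool]
  congr 1
  rw [Fintype.card_subtype_compl, Fintype.card_coe]

private lemma maxMatchingWeight_le {V : Type*} [Fintype V] [DecidableEq V]
    (G : SimpleGraph V) (w : Sym2 V → ℝ) (g : V → ℝ)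
    (hg0 : ∀ v, 0 ≤ g v) (hgw : ∀ e ∈ G.edgeSet, ∀ v, v ∈ e → w e ≤ g v) :
    maxMatchingWeight G w ≤ (1/2) * ∑ v, g v := by
  classical
  apply Real.sSup_le
  · rintro x ⟨M, hM, rfl⟩
    have key : ∀ e ∈ M, 2 * w e = ∑ v, (if v ∈ e then w e else 0) := fun e he =>
      (sym2_sum_mem e (G.not_isDiag_of_mem_edgeSet (hM.1 e he)) (w e)).symm
    have h2 : 2 * ∑ e ∈ M, w e = ∑ v, ∑ e ∈ M, (if v ∈ e then w e else 0) := by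
      rw [Finset.mul_sum, Finset.sum_congr rfl key, Finset.sum_comm]
    have h3 : ∀ v : V, ∑ e ∈ M, (if v ∈ e then w e else 0) ≤ g v := by
      intro v
      rw [← Finset.sum_filter]
      rcases (M.filter (fun e => v ∈ e)).eq_empty_or_nonempty with h | ⟨e₀, he₀⟩
      · rw [h]; simpa using hg0 v
      · have hsub : M.filter (fun e => v ∈ e) = {e₀} := by
          apply Finset.eq_singleton_iff_unique_mem.mpr
          refine ⟨he₀, fun e he => ?_⟩
          simp only [Finset.mem_filter] at he he₀
          by_contra hne
          exact hM.2 e he.1 e₀ he₀.1 hne v ⟨he.2, he₀.2⟩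
        rw [hsub, Finset.sum_singleton]
        have he₀' := Finset.mem_filter.mp he₀
        exact hgw e₀ (hM.1 e₀ he₀'.1) v he₀'.2
    have h4 : ∑ v : V, ∑ e ∈ M, (if v ∈ e then w e else 0) ≤ ∑ v, g v :=
      Finset.sum_le_sum fun v _ => h3 v
    linarith
  · have : 0 ≤ ∑ v, g v := Finset.sum_nonneg fun v _ => hg0 v
    linarith

private lemma cardH_le (n : ℕ) (a : Fin n × Fin n) :
    (univ.filter (fun b : Fin n × Fin n => a.1 = b.1 ∧ Nat.dist a.2.val b.2.val = 1)).card ≤ 2 := by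
  have h : (univ.filter (fun b : Fin n × Fin n => a.1 = b.1 ∧ Nat.dist a.2.val b.2.val = 1)).card
      ≤ (univ : Finset Bool).card := by
    apply Finset.card_le_card_of_injOn (fun b => decide (a.2.val < b.2.val))
      (fun _ _ => Finset.mem_univ _)
    intro b hb c hc h
    simp only [Finset.coe_filter, Set.mem_setOf_eq, Finset.mem_univ, true_and] at hb hc
    have hd := decide_eq_decide.mp h
    have hv : b.2.val = c.2.val := by
      have h1 := hb.2; have h2 := hc.2
      simp [Nat.dist] at h1 h2
      omega
    exact Prod.ext_iff.mpr ⟨hb.1.symm.trans hc.1, Fin.ext hv⟩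
  simpa using h

private lemma cardV_le (n : ℕ) (a : Fin n × Fin n) :
    (univ.filter (fun b : Fin n × Fin n => a.2 = b.2 ∧ Nat.dist a.1.val b.1.val = 1)).card ≤ 2 := by
  have h : (univ.filter (fun b : Fin n × Fin n => a.2 = b.2 ∧ Nat.dist a.1.val b.1.val = 1)).card
      ≤ (univ : Finset Bool).card := by
    apply Finset.card_le_card_of_injOn (fun b => decide (a.1.val < b.1.val))
      (fun _ _ => Finset.mem_univ _)
    intro b hb c hc h
    simp only [Finset.coe_filter, Set.mem_setOf_eq, Finset.mem_univ, true_and] at hb hc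
    have hd := decide_eq_decide.mp h
    have hv : b.1.val = c.1.val := by
      have h1 := hb.2; have h2 := hc.2
      simp [Nat.dist] at h1 h2
      omega
    exact Prod.ext_iff.mpr ⟨Fin.ext hv, hb.1.symm.trans hc.1⟩
  simpa using h

private lemma cardH_le_one (n : ℕ) (a : Fin n × Fin n) (ha : a.2.val = 0 ∨ a.2.val = n - 1) :
    (univ.filter (fun b : Fin n × Fin n => a.1 = b.1 ∧ Nat.dist a.2.val b.2.val = 1)).card ≤ 1 := by
  apply Finset.card_le_one.mpr
  intro b hb c hc
  simp only [Finset.mem_filter, Finset.mem_univ, true_and] at hb hc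
  have h1 := hb.2; have h2 := hc.2
  have hbn := b.2.isLt; have hcn := c.2.isLt
  have hv : b.2.val = c.2.val := by
    simp [Nat.dist] at h1 h2
    omega
  exact Prod.ext_iff.mpr ⟨hb.1.symm.trans hc.1, Fin.ext hv⟩

private lemma cardV_le_one (n : ℕ) (a : Fin n × Fin n) (ha : a.1.val = 0 ∨ a.1.val = n - 1) :
    (univ.filter (fun b : Fin n × Fin n => a.2 = b.2 ∧ Nat.dist a.1.val b.1.val = 1)).card ≤ 1 := by
  apply Finset.card_le_one.mpr
  intro b hb c hc
  simp only [Finset.mem_filter, Finset.mem_univ, true_and] at hb hc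
  have h1 := hb.2; have h2 := hc.2
  have hbn := b.1.isLt; have hcn := c.1.isLt
  have hv : b.1.val = c.1.val := by
    simp [Nat.dist] at h1 h2
    omega
  exact Prod.ext_iff.mpr ⟨Fin.ext hv, hb.1.symm.trans hc.1⟩

private lemma neighbor_subset (n : ℕ) (a : Fin n × Fin n) [Fintype ((gridGraph n).neighborSet a)] :
    (gridGraph n).neighborFinset a ⊆
      (univ.filter (fun b : Fin n × Fin n => a.1 = b.1 ∧ Nat.dist a.2.val b.2.val = 1)) ∪
      (univ.filter (fun b : Fin n × Fin n => a.2 = b.2 ∧ Nat.dist a.1.val b.1.val = 1)) := by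
  intro b hb
  rw [SimpleGraph.mem_neighborFinset] at hb
  rw [gridGraph, SimpleGraph.fromRel_adj] at hb
  simp only [Finset.mem_union, Finset.mem_filter, Finset.mem_univ, true_and]
  rcases hb.2 with (h | h) | (h | h)
  · exact Or.inl h
  · exact Or.inr h
  · exact Or.inl ⟨h.1.symm, by rw [Nat.dist_comm]; exact h.2⟩
  · exact Or.inr ⟨h.1.symm, by rw [Nat.dist_comm]; exact h.2⟩

private lemma deg_le (n : ℕ) (a : Fin n × Fin n) [Fintype ((gridGraph n).neighborSet a)] :
    ((gridGraph n).degree a ≤ 4) ∧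
    ((a.1.val = 0 ∨ a.1.val = n - 1) → (gridGraph n).degree a ≤ 3) ∧
    ((a.2.val = 0 ∨ a.2.val = n - 1) → (gridGraph n).degree a ≤ 3) ∧
    (((a.1.val = 0 ∨ a.1.val = n - 1) ∧ (a.2.val = 0 ∨ a.2.val = n - 1)) →
      (gridGraph n).degree a ≤ 2) := by
  have hdeg : (gridGraph n).degree a = ((gridGraph n).neighborFinset a).card :=
    ((gridGraph n).card_neighborFinset_eq_degree a).symm
  have hle : ((gridGraph n).neighborFinset a).card ≤
      (univ.filter (fun b : Fin n × Fin n => a.1 = b.1 ∧ Nat.dist a.2.val b.2.val = 1)).card +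
      (univ.filter (fun b : Fin n × Fin n => a.2 = b.2 ∧ Nat.dist a.1.val b.1.val = 1)).card :=
    le_trans (Finset.card_le_card (neighbor_subset n a)) (Finset.card_union_le _ _)
  have h1 := cardH_le n a
  have h2 := cardV_le n a
  refine ⟨by omega, fun h => ?_, fun h => ?_, fun h => ?_⟩
  · have := cardV_le_one n a h; omega
  · have := cardH_le_one n a h; omega
  · have := cardV_le_one n a h.1; have := cardH_le_one n a h.2; omega

open scoped Classical in
private lemma Icard_eq (n : ℕ) (a : Fin n × Fin n) :
    (Finset.univ.filter
        (fun e : ↥(gridGraph n).edgeFinset => a ∈ (e : Sym2 (Fin n × Fin n)))).card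
      = (gridGraph n).degree a := by
  rw [← SimpleGraph.card_incidenceFinset_eq_degree]
  refine Finset.card_bij (fun e _ => (e : Sym2 (Fin n × Fin n))) ?_ ?_ ?_
  · intro e he
    simp only [Finset.mem_filter, Finset.mem_univ, true_and] at he
    rw [SimpleGraph.mem_incidenceFinset]
    exact ⟨SimpleGraph.mem_edgeFinset.mp e.2, he⟩
  · intro e₁ h₁ e₂ h₂ h
    exact Subtype.ext h
  · intro e he
    rw [SimpleGraph.mem_incidenceFinset] at he
    exact ⟨⟨e, SimpleGraph.mem_edgeFinset.mpr he.1⟩,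
      by simp only [Finset.mem_filter, Finset.mem_univ, true_and]; exact he.2, rfl⟩

open scoped Classical in
private lemma interior_card (n : ℕ) :
    ((Finset.univ : Finset (Fin n × Fin n)).filter
      (fun v => ¬(v.1.val = 0 ∨ v.1.val = n - 1 ∨ v.2.val = 0 ∨ v.2.val = n - 1))).card
      ≤ (n - 2) * (n - 2) := by
  have h : ((Finset.univ : Finset (Fin n × Fin n)).filter
      (fun v => ¬(v.1.val = 0 ∨ v.1.val = n - 1 ∨ v.2.val = 0 ∨ v.2.val = n - 1))).card
      ≤ ((Finset.Ioo 0 (n-1)) ×ˢ (Finset.Ioo 0 (n-1)) : Finset (ℕ × ℕ)).card := by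
    apply Finset.card_le_card_of_injOn (fun v => (v.1.val, v.2.val))
    · intro v hv
      simp only [Finset.coe_filter, Finset.mem_coe, Set.mem_setOf_eq, Finset.mem_filter, Finset.mem_univ, true_and] at hv
      push_neg at hv
      have h1 := v.1.isLt; have h2 := v.2.isLt
      simp only [Finset.mem_coe, Finset.mem_product, Finset.mem_Ioo]
      omega
    · intro b hb c hc h
      simp only [Prod.ext_iff] at h
      exact Prod.ext_iff.mpr ⟨Fin.ext h.1, Fin.ext h.2⟩
  rw [Finset.card_product, Nat.card_Ioo] at h
  have he : n - 1 - 0 - 1 = n - 2 := by omega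
  rw [he] at h
  exact h

open scoped Classical in
private lemma corner_card (n : ℕ) (hn : 2 ≤ n) :
    4 ≤ ((Finset.univ : Finset (Fin n × Fin n)).filter
      (fun v => (v.1.val = 0 ∨ v.1.val = n - 1) ∧ (v.2.val = 0 ∨ v.2.val = n - 1))).card := by
  set z : Fin n := ⟨0, by omega⟩ with hz
  set L : Fin n := ⟨n - 1, by omega⟩ with hL
  have hzL : z ≠ L := by
    simp only [hz, hL, Ne, Fin.ext_iff]
    omega
  have hsub : (({z, L} : Finset (Fin n)) ×ˢ ({z, L} : Finset (Fin n))) ⊆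
      (Finset.univ : Finset (Fin n × Fin n)).filter
        (fun v => (v.1.val = 0 ∨ v.1.val = n - 1) ∧ (v.2.val = 0 ∨ v.2.val = n - 1)) := by
    intro b hb
    simp only [Finset.mem_product, Finset.mem_insert, Finset.mem_singleton] at hb
    simp only [Finset.mem_filter, Finset.mem_univ, true_and]
    constructor
    · rcases hb.1 with h | h <;> rw [h] <;> simp [hz, hL]
    · rcases hb.2 with h | h <;> rw [h] <;> simp [hz, hL]
  have hc : (({z, L} : Finset (Fin n)) ×ˢ ({z, L} : Finset (Fin n))).card = 4 := by
    rw [Finset.card_product, Finset.card_pair hzL]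
  calc 4 = (({z, L} : Finset (Fin n)) ×ˢ ({z, L} : Finset (Fin n))).card := hc.symm
    _ ≤ _ := Finset.card_le_card hsub

set_option maxHeartbeats 1000000 in
open scoped Classical in
private lemma pow_bound (n : ℕ) (v : Fin n × Fin n) :
    (1/16:ℝ) + (if v.1.val = 0 ∨ v.1.val = n - 1 ∨ v.2.val = 0 ∨ v.2.val = n - 1
        then (1/16:ℝ) else 0)
      + (if (v.1.val = 0 ∨ v.1.val = n - 1) ∧ (v.2.val = 0 ∨ v.2.val = n - 1)
        then (1/8:ℝ) else 0)
    ≤ (1/2:ℝ)^((gridGraph n).degree v) := by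
  obtain ⟨h4, h3l, h3r, h2⟩ := deg_le n v
  have key : ∀ k : ℕ, (gridGraph n).degree v ≤ k → ((1:ℝ)/2)^k ≤ (1/2)^((gridGraph n).degree v) :=
    fun k hk => pow_le_pow_of_le_one (by norm_num) (by norm_num) hk
  by_cases hc : (v.1.val = 0 ∨ v.1.val = n - 1) ∧ (v.2.val = 0 ∨ v.2.val = n - 1)
  · have hb : v.1.val = 0 ∨ v.1.val = n - 1 ∨ v.2.val = 0 ∨ v.2.val = n - 1 := by tauto
    have := key 2 (h2 hc)
    rw [if_pos hb, if_pos hc]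
    norm_num at this ⊢
    linarith
  · by_cases hb : v.1.val = 0 ∨ v.1.val = n - 1 ∨ v.2.val = 0 ∨ v.2.val = n - 1
    · have hd3 : (gridGraph n).degree v ≤ 3 := by
        rcases hb with h | h | h | h
        · exact h3l (Or.inl h)
        · exact h3l (Or.inr h)
        · exact h3r (Or.inl h)
        · exact h3r (Or.inr h)
      have := key 3 hd3
      rw [if_pos hb, if_neg hc]
      norm_num at this ⊢
      linarith
    · have := key 4 h4
      rw [if_neg hb, if_neg hc]
      norm_num at this ⊢
      linarith

open scoped Classical in
private lemma sum_bound (n : ℕ) (hn : 2 ≤ n) :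
    (1/16:ℝ) * (n*n) + (1/16) * (4*n - 4) + (1/8) * 4
      ≤ ∑ v : Fin n × Fin n, (1/2:ℝ)^((gridGraph n).degree v) := by
  have hstep : ∑ v : Fin n × Fin n,
      ((1/16:ℝ) + (if v.1.val = 0 ∨ v.1.val = n - 1 ∨ v.2.val = 0 ∨ v.2.val = n - 1
          then (1/16:ℝ) else 0)
        + (if (v.1.val = 0 ∨ v.1.val = n - 1) ∧ (v.2.val = 0 ∨ v.2.val = n - 1)
          then (1/8:ℝ) else 0))
      ≤ ∑ v : Fin n × Fin n, (1/2:ℝ)^((gridGraph n).degree v) :=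
    Finset.sum_le_sum fun v _ => pow_bound n v
  refine le_trans ?_ hstep
  rw [Finset.sum_add_distrib, Finset.sum_add_distrib, Finset.sum_const,
    ← Finset.sum_filter, ← Finset.sum_filter, Finset.sum_const, Finset.sum_const]
  have hcard : (Finset.univ : Finset (Fin n × Fin n)).card = n * n := by
    simp [Finset.card_univ]
  -- boundary count
  have hsplit := Finset.card_filter_add_card_filter_not
    (s := (Finset.univ : Finset (Fin n × Fin n)))
    (p := fun v => v.1.val = 0 ∨ v.1.val = n - 1 ∨ v.2.val = 0 ∨ v.2.val = n - 1)
  have hint := interior_card n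
  have hBnat : n * n ≤ ((Finset.univ : Finset (Fin n × Fin n)).filter
      (fun v => v.1.val = 0 ∨ v.1.val = n - 1 ∨ v.2.val = 0 ∨ v.2.val = n - 1)).card
      + (n - 2) * (n - 2) := by
    rw [hcard] at hsplit
    omega
  have hC := corner_card n hn
  have hB : (4:ℝ) * n - 4 ≤ (((Finset.univ : Finset (Fin n × Fin n)).filter
      (fun v => v.1.val = 0 ∨ v.1.val = n - 1 ∨ v.2.val = 0 ∨ v.2.val = n - 1)).card : ℝ) := by
    have hcast : ((n - 2 : ℕ) : ℝ) = (n : ℝ) - 2 := by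
      push_cast [Nat.cast_sub hn]
      ring
    have := hBnat
    have hcast2 : ((n*n : ℕ) : ℝ) ≤ (((Finset.univ : Finset (Fin n × Fin n)).filter
        (fun v => v.1.val = 0 ∨ v.1.val = n - 1 ∨ v.2.val = 0 ∨ v.2.val = n - 1)).card : ℝ)
        + ((n-2:ℕ):ℝ) * ((n-2:ℕ):ℝ) := by
      push_cast
      exact_mod_cast Nat.cast_le.mpr hBnat
    rw [hcast] at hcast2
    push_cast at hcast2
    nlinarith
  have hC' : (4:ℝ) ≤ (((Finset.univ : Finset (Fin n × Fin n)).filter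
      (fun v => (v.1.val = 0 ∨ v.1.val = n - 1) ∧ (v.2.val = 0 ∨ v.2.val = n - 1))).card : ℝ) := by
    exact_mod_cast hC
  rw [hcard]
  simp only [nsmul_eq_mul]
  push_cast
  nlinarith

open scoped Classical in
/-- For the `n × n` grid graph with i.i.d. edge weights uniform on `{1, 2}`,
the expected weight of a maximum-weight matching is at most `(31/32)n² − (1/8)n − 1/8`.
The expectation is written as an average over all assignments of weights to the edges. -/
theorem grid_expected_optimal_matching_bound (n : ℕ) (hn : 2 ≤ n) :
    ∑ f : ↥(gridGraph n).edgeFinset → Bool,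
        ((1 : ℝ) / 2) ^ ((gridGraph n).edgeFinset.card) *
          maxMatchingWeight (gridGraph n)
            (fun e => if h : e ∈ (gridGraph n).edgeFinset then
                (if f ⟨e, h⟩ then 2 else 1) else 0)
      ≤ (31 / 32) * (n : ℝ) ^ 2 - (1 / 8) * n - 1 / 8 := by
  have hNcard : ∀ v : Fin n × Fin n,
      (Finset.univ.filter
        (fun e : ↥(gridGraph n).edgeFinset => v ∈ (e : Sym2 (Fin n × Fin n)))).card
        ≤ (gridGraph n).edgeFinset.card := fun v => by
    calc (Finset.univ.filter
        (fun e : ↥(gridGraph n).edgeFinset => v ∈ (e : Sym2 (Fin n × Fin n)))).card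
        ≤ (Finset.univ : Finset ↥(gridGraph n).edgeFinset).card := Finset.card_le_univ _
      _ = (gridGraph n).edgeFinset.card := by rw [Finset.card_univ, Fintype.card_coe]
  have stepA : ∀ f : ↥(gridGraph n).edgeFinset → Bool,
      maxMatchingWeight (gridGraph n)
        (fun e => if h : e ∈ (gridGraph n).edgeFinset then
            (if f ⟨e, h⟩ then 2 else 1) else 0)
      ≤ (1/2) * ∑ v : Fin n × Fin n,
          (if ∀ e ∈ Finset.univ.filter
              (fun e : ↥(gridGraph n).edgeFinset => v ∈ (e : Sym2 (Fin n × Fin n))),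
              f e = false then (1:ℝ) else 2) := by
    intro f
    apply maxMatchingWeight_le
    · intro v; split <;> norm_num
    · intro e he v hv
      have heE : e ∈ (gridGraph n).edgeFinset := SimpleGraph.mem_edgeFinset.mpr he
      rw [dif_pos heE]
      by_cases hall : ∀ e' ∈ Finset.univ.filter
          (fun e' : ↥(gridGraph n).edgeFinset => v ∈ (e' : Sym2 (Fin n × Fin n))),
          f e' = false
      · have hf : f ⟨e, heE⟩ = false := hall ⟨e, heE⟩ (by
          simp only [Finset.mem_filter, Finset.mem_univ, true_and]; exact hv)
        rw [if_pos hall]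
        simp [hf]
      · rw [if_neg hall]
        split <;> norm_num
  have stepB : ∀ v : Fin n × Fin n,
      ∑ f : ↥(gridGraph n).edgeFinset → Bool,
        ((1:ℝ)/2)^((gridGraph n).edgeFinset.card) *
          (if ∀ e ∈ Finset.univ.filter
              (fun e : ↥(gridGraph n).edgeFinset => v ∈ (e : Sym2 (Fin n × Fin n))),
              f e = false then (1:ℝ) else 2)
        = 2 - (1/2)^((gridGraph n).degree v) := by
    intro v
    rw [← Icard_eq n v]
    have hdN := hNcard v
    have h1 : ∀ f : ↥(gridGraph n).edgeFinset → Bool,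
        ((1:ℝ)/2)^((gridGraph n).edgeFinset.card) *
          (if ∀ e ∈ Finset.univ.filter
              (fun e : ↥(gridGraph n).edgeFinset => v ∈ (e : Sym2 (Fin n × Fin n))),
              f e = false then (1:ℝ) else 2)
        = ((1:ℝ)/2)^((gridGraph n).edgeFinset.card) * 2
          - ((1:ℝ)/2)^((gridGraph n).edgeFinset.card) *
            (if ∀ e ∈ Finset.univ.filter
                (fun e : ↥(gridGraph n).edgeFinset => v ∈ (e : Sym2 (Fin n × Fin n))),
                f e = false then (1:ℝ) else 0) := by
      intro f; split_ifs <;> ring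
    rw [Finset.sum_congr rfl fun f _ => h1 f, Finset.sum_sub_distrib, Finset.sum_const,
      ← Finset.mul_sum, Finset.sum_boole, card_forall_false]
    have hcard : (Finset.univ : Finset (↥(gridGraph n).edgeFinset → Bool)).card
        = 2^((gridGraph n).edgeFinset.card) := by
      rw [Finset.card_univ, Fintype.card_fun, Fintype.card_bool, Fintype.card_coe]
    have hα : Fintype.card ↥(gridGraph n).edgeFinset = (gridGraph n).edgeFinset.card :=
      Fintype.card_coe _
    rw [hcard, hα, nsmul_eq_mul]
    push_cast
    have h2 := pow_half_calc ((gridGraph n).edgeFinset.card)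
      ((Finset.univ.filter
        (fun e : ↥(gridGraph n).edgeFinset => v ∈ (e : Sym2 (Fin n × Fin n)))).card) hdN
    have h3 : ((2:ℝ))^((gridGraph n).edgeFinset.card)
        * (((1:ℝ)/2)^((gridGraph n).edgeFinset.card) * 2) = 2 := by
      have hh : ((1:ℝ)/2)^((gridGraph n).edgeFinset.card)
          * 2^((gridGraph n).edgeFinset.card) = 1 := by
        rw [← mul_pow]; norm_num
      calc ((2:ℝ))^((gridGraph n).edgeFinset.card)
          * (((1:ℝ)/2)^((gridGraph n).edgeFinset.card) * 2)
          = (((1:ℝ)/2)^((gridGraph n).edgeFinset.card)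
            * 2^((gridGraph n).edgeFinset.card)) * 2 := by ring
        _ = 2 := by rw [hh]; ring
    linarith
  calc ∑ f : ↥(gridGraph n).edgeFinset → Bool,
        ((1 : ℝ) / 2) ^ ((gridGraph n).edgeFinset.card) *
          maxMatchingWeight (gridGraph n)
            (fun e => if h : e ∈ (gridGraph n).edgeFinset then
                (if f ⟨e, h⟩ then 2 else 1) else 0)
      ≤ ∑ f : ↥(gridGraph n).edgeFinset → Bool,
        ((1 : ℝ) / 2) ^ ((gridGraph n).edgeFinset.card) *
          ((1/2) * ∑ v : Fin n × Fin n,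
            (if ∀ e ∈ Finset.univ.filter
                (fun e : ↥(gridGraph n).edgeFinset => v ∈ (e : Sym2 (Fin n × Fin n))),
                f e = false then (1:ℝ) else 2)) :=
        Finset.sum_le_sum fun f _ => mul_le_mul_of_nonneg_left (stepA f) (by positivity)
    _ = ∑ f : ↥(gridGraph n).edgeFinset → Bool, ∑ v : Fin n × Fin n,
        (1/2) * (((1 : ℝ) / 2) ^ ((gridGraph n).edgeFinset.card) *
          (if ∀ e ∈ Finset.univ.filter
              (fun e : ↥(gridGraph n).edgeFinset => v ∈ (e : Sym2 (Fin n × Fin n))),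
              f e = false then (1:ℝ) else 2)) := by
        refine Finset.sum_congr rfl fun f _ => ?_
        rw [Finset.mul_sum, Finset.mul_sum]
        refine Finset.sum_congr rfl fun v _ => ?_
        ring
    _ = ∑ v : Fin n × Fin n, ∑ f : ↥(gridGraph n).edgeFinset → Bool,
        (1/2) * (((1 : ℝ) / 2) ^ ((gridGraph n).edgeFinset.card) *
          (if ∀ e ∈ Finset.univ.filter
              (fun e : ↥(gridGraph n).edgeFinset => v ∈ (e : Sym2 (Fin n × Fin n))),
              f e = false then (1:ℝ) else 2)) := Finset.sum_comm
    _ = (1/2) * ∑ v : Fin n × Fin n, ∑ f : ↥(gridGraph n).edgeFinset → Bool,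
        ((1 : ℝ) / 2) ^ ((gridGraph n).edgeFinset.card) *
          (if ∀ e ∈ Finset.univ.filter
              (fun e : ↥(gridGraph n).edgeFinset => v ∈ (e : Sym2 (Fin n × Fin n))),
              f e = false then (1:ℝ) else 2) := by
        rw [Finset.mul_sum]
        refine Finset.sum_congr rfl fun v _ => ?_
        rw [Finset.mul_sum]
    _ = (1/2) * ∑ v : Fin n × Fin n, ((2:ℝ) - (1/2)^((gridGraph n).degree v)) := by
        rw [Finset.sum_congr rfl fun v _ => stepB v]
    _ ≤ (31 / 32) * (n : ℝ) ^ 2 - (1 / 8) * n - 1 / 8 := by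
        have hsum : ∑ v : Fin n × Fin n, ((2:ℝ) - (1/2)^((gridGraph n).degree v))
            = 2 * (n*n) - ∑ v : Fin n × Fin n, (1/2:ℝ)^((gridGraph n).degree v) := by
          rw [Finset.sum_sub_distrib, Finset.sum_const]
          have hcard : (Finset.univ : Finset (Fin n × Fin n)).card = n * n := by
            simp [Finset.card_univ]
          rw [hcard, nsmul_eq_mul]
          push_cast
          ring
        rw [hsum]
        have hS := sum_bound n hn
        have hn2 : ((n:ℝ))^2 = (n:ℝ) * n := sq (n:ℝ) ▸ by ring
        nlinarith
end

section
/- For fixed d > 0 and p_K ∈ (0,1), the function F(y) = e^{−p_K d} Σ_{i=0}^∞ (p_K d)^i (1 − (1−y)^{i+1}) / ((i+1)! · y) is strictly decreasing in y on (0,1), satisfies lim_{y→0⁺} F(y) = 1, and F(1) = (1 − e^{−p_K d})/(p_K d) < 1; hence the equation y = F(y) has a unique solution in (0,1). -/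
lemma tsum_shift_exp (t : ℝ) :
    ∑' i : ℕ, t ^ (i + 1) / ((Nat.factorial (i + 1) : ℝ)) = Real.exp t - 1 := by
  have hs := Real.summable_pow_div_factorial t
  have h0 : ∑' n : ℕ, t ^ n / (Nat.factorial n : ℝ)
      = t ^ 0 / (Nat.factorial 0 : ℝ) + ∑' i : ℕ, t ^ (i + 1) / ((Nat.factorial (i + 1) : ℝ)) :=
    Summable.tsum_eq_zero_add hs
  have he : Real.exp t = ∑' n : ℕ, t ^ n / (Nat.factorial n : ℝ) := by
    rw [Real.exp_eq_exp_ℝ, NormedSpace.exp_eq_tsum_div]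
  rw [he, h0]
  simp


/-- The function `F(y) = e^{−p d} Σ_{i=0}^∞ (p d)^i (1 − (1−y)^{i+1}) / ((i+1)! y)`
arising in the fixed-point equation for greedy matching on Poisson Galton–Watson trees. -/
noncomputable def proposalFn (d p y : ℝ) : ℝ :=
  Real.exp (-(p * d)) *
    ∑' i : ℕ, (p * d) ^ i * (1 - (1 - y) ^ (i + 1)) / ((Nat.factorial (i + 1) : ℝ) * y)


lemma term_eq (c x y : ℝ) (hc : c ≠ 0) (hy : y ≠ 0) (i : ℕ) :
    c ^ i * (1 - x ^ (i + 1)) / ((Nat.factorial (i + 1) : ℝ) * y)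
      = (c * y)⁻¹ * (c ^ (i + 1) / (Nat.factorial (i + 1) : ℝ)
        - (c * x) ^ (i + 1) / (Nat.factorial (i + 1) : ℝ)) := by
  have hfac : ((Nat.factorial (i + 1) : ℝ)) ≠ 0 := by positivity
  rw [mul_pow, pow_succ c i]
  field_simp


lemma proposalFn_eq (d p y : ℝ) (hc : p * d ≠ 0) (hy : y ≠ 0) :
    proposalFn d p y = (1 - Real.exp (-(p * d * y))) / (p * d * y) := by
  set c := p * d with hcdef
  have hterm : ∀ i : ℕ, c ^ i * (1 - (1 - y) ^ (i + 1)) / ((Nat.factorial (i + 1) : ℝ) * y)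
      = (c * y)⁻¹ * (c ^ (i + 1) / (Nat.factorial (i + 1) : ℝ)
        - (c * (1 - y)) ^ (i + 1) / (Nat.factorial (i + 1) : ℝ)) := by
    intro i
    exact term_eq c (1 - y) y hc hy i
  have hs1 : Summable (fun i : ℕ => c ^ (i + 1) / (Nat.factorial (i + 1) : ℝ)) :=
    (summable_nat_add_iff (f := fun n : ℕ => c ^ n / (Nat.factorial n : ℝ)) 1).mpr
      (Real.summable_pow_div_factorial c)
  have hs2 : Summable (fun i : ℕ => (c * (1 - y)) ^ (i + 1) / (Nat.factorial (i + 1) : ℝ)) :=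
    (summable_nat_add_iff (f := fun n : ℕ => (c * (1 - y)) ^ n / (Nat.factorial n : ℝ)) 1).mpr
      (Real.summable_pow_div_factorial (c * (1 - y)))
  have hsum : ∑' i : ℕ, c ^ i * (1 - (1 - y) ^ (i + 1)) / ((Nat.factorial (i + 1) : ℝ) * y)
      = (c * y)⁻¹ * ((Real.exp c - 1) - (Real.exp (c * (1 - y)) - 1)) := by
    rw [tsum_congr hterm, tsum_mul_left, Summable.tsum_sub hs1 hs2, tsum_shift_exp, tsum_shift_exp]
  rw [proposalFn, hsum]
  have key : Real.exp (-c) * (Real.exp c - 1 - (Real.exp (c * (1 - y)) - 1))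
      = 1 - Real.exp (-(c * y)) := by
    have e1 : Real.exp (-c) * Real.exp c = 1 := by rw [← Real.exp_add]; simp
    have e2 : Real.exp (-c) * Real.exp (c * (1 - y)) = Real.exp (-(c * y)) := by
      rw [← Real.exp_add]; congr 1; ring
    nlinarith [e1, e2]
  rw [show Real.exp (-c) * ((c * y)⁻¹ * (Real.exp c - 1 - (Real.exp (c * (1 - y)) - 1)))
      = (Real.exp (-c) * (Real.exp c - 1 - (Real.exp (c * (1 - y)) - 1))) * (c * y)⁻¹ by ring,
    key, div_eq_mul_inv]


noncomputable def auxG (t : ℝ) : ℝ := (1 - Real.exp (-t)) / t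

lemma auxG_hasDerivAt_num (t : ℝ) :
    HasDerivAt (fun s : ℝ => 1 - Real.exp (-s)) (Real.exp (-t)) t := by
  have h := (Real.hasDerivAt_exp (-t)).comp t (hasDerivAt_neg t)
  have h2 := (hasDerivAt_const t (1 : ℝ)).sub h
  simp at h2
  exact h2

lemma auxG_hasDerivAt {t : ℝ} (ht : t ≠ 0) :
    HasDerivAt auxG ((Real.exp (-t) * t - (1 - Real.exp (-t))) / t ^ 2) t := by
  have h2 := (auxG_hasDerivAt_num t).div (hasDerivAt_id t) ht
  simp at h2
  exact h2

lemma auxG_strictAntiOn : StrictAntiOn auxG (Set.Ioi 0) := by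
  apply strictAntiOn_of_deriv_neg (convex_Ioi 0)
  · exact ContinuousOn.div (by fun_prop) continuousOn_id (fun x hx => ne_of_gt hx)
  · intro t ht
    rw [interior_Ioi] at ht
    rw [(auxG_hasDerivAt (ne_of_gt ht)).deriv]
    apply div_neg_of_neg_of_pos _ (pow_pos ht 2)
    have h1 := Real.add_one_lt_exp (ne_of_gt ht)
    have h2 := Real.exp_pos t
    have h3 : Real.exp (-t) = (Real.exp t)⁻¹ := Real.exp_neg t
    rw [h3]
    rw [inv_eq_one_div]
    have h4 : (1 / Real.exp t) * (t + 1) < 1 := by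
      rw [div_mul_eq_mul_div, div_lt_one h2]
      linarith
    nlinarith
  
lemma auxG_tendsto : Filter.Tendsto auxG (nhdsWithin 0 (Set.Ioi 0)) (nhds 1) := by
  have hd0 : HasDerivAt (fun s : ℝ => 1 - Real.exp (-s)) 1 0 := by
    simpa using auxG_hasDerivAt_num 0
  rw [hasDerivAt_iff_tendsto_slope] at hd0
  have heq : slope (fun s : ℝ => 1 - Real.exp (-s)) 0 = auxG := by
    funext t
    simp [slope_def_field, auxG, Real.exp_zero]
  rw [heq] at hd0
  exact hd0.mono_left (nhdsWithin_mono 0 (fun x hx => ne_of_gt hx))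

/-- For fixed `d > 0` and `p_K ∈ (0,1)`, the function `F` is strictly
decreasing on `(0,1)`, satisfies `lim_{y→0⁺} F(y) = 1` and
`F(1) = (1 − e^{−p_K d})/(p_K d) < 1`; hence `y = F(y)` has a unique solution in `(0,1)`. -/
theorem fixed_point_unique
    (d p : ℝ) (hd : 0 < d) (hp0 : 0 < p) (hp1 : p < 1) :
    StrictAntiOn (proposalFn d p) (Set.Ioo 0 1) ∧
    Filter.Tendsto (proposalFn d p) (nhdsWithin 0 (Set.Ioi 0)) (nhds 1) ∧
    proposalFn d p 1 = (1 - Real.exp (-(p * d))) / (p * d) ∧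
    proposalFn d p 1 < 1 ∧
    ∃! y : ℝ, y ∈ Set.Ioo (0 : ℝ) 1 ∧ proposalFn d p y = y := by
  have hc : 0 < p * d := mul_pos hp0 hd
  have hEq : ∀ y : ℝ, y ≠ 0 → proposalFn d p y = auxG (p * d * y) := by
    intro y hy
    rw [proposalFn_eq d p y hc.ne' hy]; rfl
  -- (a) strict antitonicity
  have hanti : StrictAntiOn (proposalFn d p) (Set.Ioo 0 1) := by
    intro x hx y hy hxy
    rw [hEq x (ne_of_gt hx.1), hEq y (ne_of_gt hy.1)]
    exact auxG_strictAntiOn (Set.mem_Ioi.mpr (mul_pos hc hx.1))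
      (Set.mem_Ioi.mpr (mul_pos hc hy.1)) (by nlinarith)
  -- (b) limit at 0+
  have hmul : Filter.Tendsto (fun y : ℝ => p * d * y) (nhdsWithin 0 (Set.Ioi 0))
      (nhdsWithin 0 (Set.Ioi 0)) := by
    apply tendsto_nhdsWithin_of_tendsto_nhds_of_eventually_within
    · have : Filter.Tendsto (fun y : ℝ => p * d * y) (nhds 0) (nhds (p * d * 0)) :=
        (continuous_const.mul continuous_id).tendsto 0
      simpa using this.mono_left nhdsWithin_le_nhds
    · filter_upwards [self_mem_nhdsWithin] with y hy
      exact Set.mem_Ioi.mpr (mul_pos hc hy)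
  have htend : Filter.Tendsto (proposalFn d p) (nhdsWithin 0 (Set.Ioi 0)) (nhds 1) := by
    refine (auxG_tendsto.comp hmul).congr' ?_
    filter_upwards [self_mem_nhdsWithin] with y hy
    exact (hEq y (ne_of_gt hy)).symm
  -- (c) value at 1
  have hval : proposalFn d p 1 = (1 - Real.exp (-(p * d))) / (p * d) := by
    rw [hEq 1 one_ne_zero]; simp [auxG]
  -- (d) < 1
  have hlt : proposalFn d p 1 < 1 := by
    rw [hval, div_lt_one hc]
    have := Real.add_one_lt_exp (neg_ne_zero.mpr hc.ne')
    linarith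
  refine ⟨hanti, htend, hval, hlt, ?_⟩
  -- (e) existence and uniqueness of fixed point
  -- find a small point where proposalFn y - y > 0
  have Hten : Filter.Tendsto (fun y => proposalFn d p y - y) (nhdsWithin 0 (Set.Ioi 0))
      (nhds 1) := by
    have hid : Filter.Tendsto (fun y : ℝ => y) (nhdsWithin 0 (Set.Ioi 0)) (nhds 0) :=
      Filter.tendsto_id.mono_right nhdsWithin_le_nhds
    simpa using htend.sub hid
  have hev1 : ∀ᶠ y in nhdsWithin (0:ℝ) (Set.Ioi 0), 0 < proposalFn d p y - y :=
    Hten.eventually (eventually_gt_nhds one_pos)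
  have hev2 : ∀ᶠ y in nhdsWithin (0:ℝ) (Set.Ioi 0), y < 1 :=
    eventually_nhdsWithin_of_eventually_nhds (eventually_lt_nhds one_pos)
  have hev3 : ∀ᶠ y in nhdsWithin (0:ℝ) (Set.Ioi 0), y ∈ Set.Ioi (0:ℝ) :=
    self_mem_nhdsWithin
  obtain ⟨a, ha1, ha2, ha3⟩ := (hev1.and (hev2.and hev3)).exists
  have ha0 : 0 < a := ha3
  -- IVT on [a, 1]
  set K : ℝ → ℝ := fun y => (1 - Real.exp (-(p * d * y))) / (p * d * y) - y with hK
  have hKcont : ContinuousOn K (Set.Icc a 1) := by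
    apply ContinuousOn.sub _ continuousOn_id
    apply ContinuousOn.div (by fun_prop) (by fun_prop)
    intro y hy
    exact ne_of_gt (mul_pos hc (lt_of_lt_of_le ha0 hy.1))
  have hKeq : ∀ y : ℝ, 0 < y → K y = proposalFn d p y - y := by
    intro y hy
    simp only [hK]
    rw [← proposalFn_eq d p y hc.ne' (ne_of_gt hy)]
  have hKa : 0 < K a := by rw [hKeq a ha0]; exact ha1
  have hK1 : K 1 < 0 := by
    rw [hKeq 1 one_pos]; linarith
  have h0mem : (0:ℝ) ∈ Set.Ioo (K 1) (K a) := ⟨hK1, hKa⟩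
  obtain ⟨y, hy, hKy⟩ := intermediate_value_Ioo' (le_of_lt ha2) hKcont h0mem
  have hymem : y ∈ Set.Ioo (0:ℝ) 1 := ⟨lt_trans ha0 hy.1, hy.2⟩
  have hyfix : proposalFn d p y = y := by
    have := hKeq y hymem.1
    rw [hKy] at this
    linarith
  refine ⟨y, ⟨hymem, hyfix⟩, ?_⟩
  rintro z ⟨hzmem, hzfix⟩
  rcases lt_trichotomy z y with h | h | h
  · exfalso
    have := hanti hzmem hymem h
    rw [hzfix, hyfix] at this
    exact absurd this (not_lt_of_gt h)
  · exact h
  · exfalso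
    have := hanti hymem hzmem h
    rw [hzfix, hyfix] at this
    exact absurd this (not_lt_of_gt h)
end
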